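/- Let T be a contractive positive linear map on B(H) and T̃ its unitalization on B(H ⊕ ℂ). If (p̃, K̃, B̃, θ̃) is a strong dilation of T̃, then with q the image in B̃ of the projection 0 ⊕ 1_ℂ ∈ B(H⊕ℂ), one has θ̃_s(q) ≥ q for all s, and consequently the corner B = (1−q)B̃(1−q) is invariant under every θ̃_s. -/

import Mathlib

open scoped ComplexOrder

/-- A map `T : B(E) → B(F)` is completely positive if for all `n`, all
`a_1, …, a_n ∈ B(E)` and `v_1, …, v_n ∈ F`, `Σ_{i,j} ⟪v_i, T(a_i* a_j) v_j⟫ ≥ 0`. -/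
def IsCompletelyPositive {E F : Type*}
    [NormedAddCommGroup E] [InnerProductSpace ℂ E] [CompleteSpace E]
    [NormedAddCommGroup F] [InnerProductSpace ℂ F]
    (T : (E →L[ℂ] E) → (F →L[ℂ] F)) : Prop :=
  ∀ (n : ℕ) (a : Fin n → (E →L[ℂ] E)) (v : Fin n → F),
    0 ≤ ∑ i, ∑ j, (inner ℂ (v i) ((T (star (a i) * a j)) (v j)) : ℂ)


noncomputable section
open ContinuousLinearMap

variable (H : Type*) [NormedAddCommGroup H] [InnerProductSpace ℂ H] [CompleteSpace H]

/-- The Hilbert space `H ⊕ ℂ`. -/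
abbrev Hplus := WithLp 2 (H × ℂ)

variable {H}

/-- Inclusion of `H` into `H ⊕ ℂ`. -/
def inclH : H →L[ℂ] Hplus H :=
  (WithLp.prodContinuousLinearEquiv 2 ℂ H ℂ).symm.toContinuousLinearMap ∘L
    ContinuousLinearMap.inl ℂ H ℂ

/-- Projection of `H ⊕ ℂ` onto `H`. -/
def projH : Hplus H →L[ℂ] H :=
  ContinuousLinearMap.fst ℂ H ℂ ∘L
    (WithLp.prodContinuousLinearEquiv 2 ℂ H ℂ).toContinuousLinearMap

/-- Inclusion of `ℂ` into `H ⊕ ℂ`. -/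
def inclC : ℂ →L[ℂ] Hplus H :=
  (WithLp.prodContinuousLinearEquiv 2 ℂ H ℂ).symm.toContinuousLinearMap ∘L
    ContinuousLinearMap.inr ℂ H ℂ

/-- Projection of `H ⊕ ℂ` onto `ℂ`. -/
def projC : Hplus H →L[ℂ] ℂ :=
  ContinuousLinearMap.snd ℂ H ℂ ∘L
    (WithLp.prodContinuousLinearEquiv 2 ℂ H ℂ).toContinuousLinearMap

/-- The block-diagonal operator `[[X, 0], [0, c]]` on `H ⊕ ℂ`. -/
def blockDiag (X : H →L[ℂ] H) (c : ℂ) : Hplus H →L[ℂ] Hplus H :=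
  inclH ∘L X ∘L projH + c • (inclC ∘L projC)

/-- The unitalization `T̃` of a map `T` on `B(H)`, acting on `B(H ⊕ ℂ)` by
`T̃([[A, h], [g*, c]]) = [[T(A) + c(1 - T(1)), 0], [0, c]]`. -/
def unitalization (T : (H →L[ℂ] H) → (H →L[ℂ] H))
    (M : Hplus H →L[ℂ] Hplus H) : Hplus H →L[ℂ] Hplus H :=
  blockDiag (T (projH ∘L M ∘L inclH) + (projC (M (inclC 1))) • (1 - T 1))
    (projC (M (inclC 1)))


set_option linter.unusedSectionVars false in
lemma myAuxB : blockDiag (0 : H →L[ℂ] H) 1 * blockDiag (0 : H →L[ℂ] H) 1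
    = blockDiag (0 : H →L[ℂ] H) 1 := by
  ext x
  simp [mul_apply, blockDiag, inclC, projC, inclH, projH]

lemma myAuxC : IsSelfAdjoint (blockDiag (0 : H →L[ℂ] H) 1) := by
  rw [ContinuousLinearMap.isSelfAdjoint_iff_isSymmetric]
  intro x y
  simp [blockDiag, inclC, projC, inclH, projH, WithLp.prod_inner_apply]

set_option linter.unusedSectionVars false in
lemma myAuxF (T' : (H →L[ℂ] H) → (H →L[ℂ] H)) :
    blockDiag (0 : H →L[ℂ] H) 1 * unitalization T' (blockDiag 0 1) * blockDiag 0 1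
      = blockDiag (0 : H →L[ℂ] H) 1 := by
  ext x
  simp [mul_apply, unitalization, blockDiag, inclC, projC, inclH, projH]

/-- Let `T` be a contractive positive linear map on `B(H)` and `T̃`
its unitalization on `B(H ⊕ ℂ)`. Suppose `(p̃, K̃, B̃, θ̃)` is a strong dilation of
`T̃`, with `ι : B(H ⊕ ℂ) → p̃ B̃ p̃` the corner embedding. Let `q = ι([[0,0],[0,1]])`
be the image of `0 ⊕ 1_ℂ`. Then `θ̃(q) ≥ q`, and consequently the corner
`(1-q) B̃ (1-q)` is invariant under `θ̃`. -/
theorem unitalization_dilation_corner_invariant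
    {H Kt : Type*} [NormedAddCommGroup H] [InnerProductSpace ℂ H] [CompleteSpace H]
    [NormedAddCommGroup Kt] [InnerProductSpace ℂ Kt] [CompleteSpace Kt]
    (T : (H →L[ℂ] H) →ₗ[ℂ] (H →L[ℂ] H))
    (hTpos : ∀ a : H →L[ℂ] H, a.IsPositive → (T a).IsPositive)
    (hTcontr : ∀ a : H →L[ℂ] H, ‖T a‖ ≤ ‖a‖)
    (Bt : StarSubalgebra ℂ (Kt →L[ℂ] Kt))
    (pt : Kt →L[ℂ] Kt) (hptB : pt ∈ Bt) (hpt : IsSelfAdjoint pt) (hpt2 : pt * pt = pt)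
    -- the corner embedding `ι : B(H ⊕ ℂ) ≅ p̃ B̃ p̃ ⊆ B̃`
    (ι : (Hplus H →L[ℂ] Hplus H) → (Kt →L[ℂ] Kt))
    (hιB : ∀ a, ι a ∈ Bt)
    (hιadd : ∀ a b, ι (a + b) = ι a + ι b)
    (hιsmul : ∀ (c : ℂ) a, ι (c • a) = c • ι a)
    (hιmul : ∀ a b, ι (a * b) = ι a * ι b)
    (hιstar : ∀ a, ι (star a) = star (ι a))
    (hιinj : Function.Injective ι)
    (hιone : ι 1 = pt)
    (hιsurj : ∀ b ∈ Bt, ∃ a, ι a = pt * b * pt)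
    -- `θ̃`, a unital *-endomorphism of `B̃`
    (θ : (Kt →L[ℂ] Kt) → (Kt →L[ℂ] Kt))
    (hθB : ∀ b ∈ Bt, θ b ∈ Bt)
    (hθadd : ∀ a b, θ (a + b) = θ a + θ b)
    (hθmul : ∀ a b, θ (a * b) = θ a * θ b)
    (hθstar : ∀ a, θ (star a) = star (θ a))
    (hθone : θ 1 = 1)
    -- the strong dilation property: `T̃(p̃ b p̃) = p̃ θ̃(b) p̃` for all `b ∈ B̃`
    (hdil : ∀ b ∈ Bt, ∀ a, ι a = pt * b * pt →
      ι (unitalization (T : (H →L[ℂ] H) → (H →L[ℂ] H)) a) = pt * θ b * pt) :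
    (θ (ι (blockDiag (0 : H →L[ℂ] H) 1)) - ι (blockDiag (0 : H →L[ℂ] H) 1)).IsPositive ∧
    ∀ b ∈ Bt,
      b = (1 - ι (blockDiag (0 : H →L[ℂ] H) 1)) * b * (1 - ι (blockDiag (0 : H →L[ℂ] H) 1)) →
      θ b = (1 - ι (blockDiag (0 : H →L[ℂ] H) 1)) * θ b *
        (1 - ι (blockDiag (0 : H →L[ℂ] H) 1)) := by
  set q0 : Hplus H →L[ℂ] Hplus H := blockDiag (0 : H →L[ℂ] H) 1 with hq0
  set q : Kt →L[ℂ] Kt := ι q0 with hqdef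
  set r : Kt →L[ℂ] Kt := θ q with hrdef
  have hq2 : q * q = q := by rw [hqdef, ← hιmul, myAuxB]
  have hqstar : star q = q := by rw [hqdef, ← hιstar, myAuxC.star_eq]
  have hqpt : pt * q = q := by rw [hqdef, ← hιone, ← hιmul, one_mul]
  have hqpt' : q * pt = q := by rw [hqdef, ← hιone, ← hιmul, mul_one]
  have hr2 : r * r = r := by rw [hrdef, ← hθmul, hq2]
  have hrstar : star r = r := by rw [hrdef, ← hθstar, hqstar]
  have hιq0 : ι q0 = pt * q * pt := by rw [hqpt, hqpt']
  have hdilq := hdil q (hιB q0) q0 hιq0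
  have assoc : ∀ x : Kt →L[ℂ] Kt, q * (pt * x * pt) * q = q * x * q := by
    intro x
    rw [mul_assoc pt x pt, ← mul_assoc q pt (x * pt), hqpt', ← mul_assoc q x pt,
      mul_assoc (q * x) pt q, hqpt]
  have key : q * r * q = q := by
    calc q * r * q = q * (pt * θ q * pt) * q := (assoc _).symm
      _ = ι q0 * ι (unitalization (T : (H →L[ℂ] H) → (H →L[ℂ] H)) q0) * ι q0 := by
          rw [← hdilq]
      _ = ι (q0 * unitalization (T : (H →L[ℂ] H) → (H →L[ℂ] H)) q0 * q0) := by
          rw [hιmul, hιmul]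
      _ = ι q0 := by rw [hq0, myAuxF]
  have hrq : r * q = q := by
    have e1 : star (r * q - q) = q * r - q := by
      rw [star_sub, star_mul, hqstar, hrstar]
    have e2 : (q * r - q) * (r * q - q) = q * (r * r) * q - q * r * q - q * r * q + q * q := by
      noncomm_ring
    have he : star (r * q - q) * (r * q - q) = 0 := by
      rw [e1, e2, hr2, key, hq2]; abel
    have := (CStarRing.star_mul_self_eq_zero_iff _).mp he
    rwa [sub_eq_zero] at this
  have hqr : q * r = q := by
    have := congrArg star hrq
    rwa [star_mul, hqstar, hrstar] at this
  have hsa : star (r - q) = r - q := by rw [star_sub, hqstar, hrstar]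
  have hidem : (r - q) * (r - q) = r - q := by
    rw [sub_mul, mul_sub, mul_sub, hr2, hrq, hqr, hq2]; abel
  constructor
  · have hpos := (isPositive_one (𝕜 := ℂ) (E := Kt)).adjoint_conj (r - q)
    have heq : adjoint (r - q) ∘L (1 : Kt →L[ℂ] Kt) ∘L (r - q) = r - q := by
      rw [← star_eq_adjoint, hsa]
      simp only [one_def, ContinuousLinearMap.comp_id, ContinuousLinearMap.id_comp]
      exact hidem
    rwa [heq] at hpos
  · intro b hb hbcorner
    have hθ0 : θ 0 = 0 := by
      have := hθadd 0 0
      simpa using this.symm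
    have hθsub : ∀ x y : Kt →L[ℂ] Kt, θ (x - y) = θ x - θ y := by
      intro x y
      have : θ (x - y) + θ y = θ x := by rw [← hθadd, sub_add_cancel]
      linear_combination (norm := abel) this
    have h1mq : θ (1 - q) = 1 - r := by rw [hθsub, hθone, hrdef]
    have hy : θ b = (1 - r) * θ b * (1 - r) := by
      calc θ b = θ ((1 - q) * b * (1 - q)) := by rw [← hbcorner]
        _ = θ (1 - q) * θ b * θ (1 - q) := by rw [hθmul, hθmul]
        _ = (1 - r) * θ b * (1 - r) := by rw [h1mq]
    have hA : (1 - q) * (1 - r) = 1 - r := by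
      have : (1 - q) * (1 - r) = 1 - r - q + q * r := by noncomm_ring
      rw [this, hqr]; abel
    have hB : (1 - r) * (1 - q) = 1 - r := by
      have : (1 - r) * (1 - q) = 1 - r - q + r * q := by noncomm_ring
      rw [this, hrq]; abel
    calc θ b = (1 - r) * θ b * (1 - r) := hy
      _ = ((1 - q) * (1 - r)) * θ b * ((1 - r) * (1 - q)) := by rw [hA, hB]
      _ = (1 - q) * ((1 - r) * θ b * (1 - r)) * (1 - q) := by noncomm_ring
      _ = (1 - q) * θ b * (1 - q) := by rw [← hy]
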